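/- Let x_1,...,x_h and y_1,...,y_{g-h} be two disjoint sets of variables (1 ≤ h ≤ g-1), and suppose all even power sums of the x-variables and all even power sums of the y-variables lie in an ideal I of the polynomial ring ℚ[x_*, y_*]. Then e_{g-1}(x,y) · e_g(x,y) ∈ I, where e_k(x,y) denotes the k-th elementary symmetric polynomial in all g variables. -/

import Mathlib

open MvPolynomial

private lemma esymm_mem_span_psum (σ : Type) [Fintype σ] (k : ℕ) (hk : 0 < k) :
    esymm σ ℚ k ∈ Ideal.span (Set.range fun j : ℕ => psum σ ℚ (j + 1)) := by
  have hnewton := MvPolynomial.mul_esymm_eq_sum σ ℚ k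
  have hmem : ((k : MvPolynomial σ ℚ) * esymm σ ℚ k) ∈
      Ideal.span (Set.range fun j : ℕ => psum σ ℚ (j + 1)) := by
    rw [hnewton]
    refine Ideal.mul_mem_left _ _ (Ideal.sum_mem _ fun a ha => ?_)
    rw [Finset.mem_filter, Finset.HasAntidiagonal.mem_antidiagonal] at ha
    have ha2 : a.2 - 1 + 1 = a.2 := by omega
    exact Ideal.mul_mem_left _ _ (Ideal.subset_span ⟨a.2 - 1, by dsimp only; rw [ha2]⟩)
  have hknz : (k : ℚ) ≠ 0 := Nat.cast_ne_zero.mpr hk.ne'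
  have heq : (C ((k : ℚ)⁻¹) : MvPolynomial σ ℚ) * ((k : MvPolynomial σ ℚ) * esymm σ ℚ k)
      = esymm σ ℚ k := by
    rw [← mul_assoc, show ((k : ℕ) : MvPolynomial σ ℚ) = C ((k : ℕ) : ℚ) from
        (map_natCast (C : ℚ →+* MvPolynomial σ ℚ) k).symm,
      ← C_mul, inv_mul_cancel₀ hknz, C_1, one_mul]
  rw [← heq]
  exact Ideal.mul_mem_left _ _ hmem

private lemma prod_sq_mem {n : ℕ} (hn : 0 < n) {S : Type*} [CommRing S] [Algebra ℚ S]
    (I : Ideal S) (v : Fin n → S) (hv : ∀ k : ℕ, 0 < k → Even k → (∑ i, v i ^ k) ∈ I) :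
    (∏ i, v i) ^ 2 ∈ I := by
  classical
  set f : MvPolynomial (Fin n) ℚ →ₐ[ℚ] S := aeval (fun i => v i ^ 2) with hf
  have hps : Finset.powersetCard n (Finset.univ : Finset (Fin n)) = {Finset.univ} := by
    have := Finset.powersetCard_self (Finset.univ : Finset (Fin n))
    rwa [Finset.card_univ, Fintype.card_fin] at this
  have h1 : f (esymm (Fin n) ℚ n) = (∏ i, v i) ^ 2 := by
    have he : esymm (Fin n) ℚ n = ∏ i, X i := by
      rw [show esymm (Fin n) ℚ n
          = ∑ t ∈ Finset.powersetCard n Finset.univ, ∏ i ∈ t, X i from rfl,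
        hps, Finset.sum_singleton]
    rw [he, map_prod]
    simp [hf, ← Finset.prod_pow]
  have h2 : ∀ j : ℕ, f (psum (Fin n) ℚ (j + 1)) ∈ I := by
    intro j
    have : f (psum (Fin n) ℚ (j + 1)) = ∑ i, v i ^ (2 * (j + 1)) := by
      simp [hf, psum, pow_mul]
    rw [this]
    exact hv _ (by omega) ⟨j + 1, by ring⟩
  have hspan := esymm_mem_span_psum (Fin n) n hn
  have hle : Ideal.span (Set.range fun j : ℕ => psum (Fin n) ℚ (j + 1))
      ≤ I.comap (f : MvPolynomial (Fin n) ℚ →+* S) := by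
    rw [Ideal.span_le]
    rintro _ ⟨j, rfl⟩
    exact h2 j
  have h3 : f (esymm (Fin n) ℚ n) ∈ I := hle hspan
  rwa [h1] at h3

/-- If all even power sums of the `x`-variables and of the `y`-variables lie in an ideal `I`
of `ℚ[x_1,...,x_h, y_1,...,y_{g-h}]`, then `e_{g-1} · e_g ∈ I`, where `e_k` is the `k`-th
elementary symmetric polynomial in all `g = h + (g-h)` variables. -/
theorem esymm_pred_mul_esymm_top_mem (g h : ℕ) (h1 : 1 ≤ h) (h2 : h ≤ g - 1) (hg : 2 ≤ g)
    (I : Ideal (MvPolynomial (Fin h ⊕ Fin (g - h)) ℚ))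
    (hx : ∀ k : ℕ, 0 < k → Even k →
      (∑ i : Fin h, (X (Sum.inl i) : MvPolynomial (Fin h ⊕ Fin (g - h)) ℚ) ^ k) ∈ I)
    (hy : ∀ k : ℕ, 0 < k → Even k →
      (∑ j : Fin (g - h), (X (Sum.inr j) : MvPolynomial (Fin h ⊕ Fin (g - h)) ℚ) ^ k) ∈ I) :
    esymm (Fin h ⊕ Fin (g - h)) ℚ (g - 1) * esymm (Fin h ⊕ Fin (g - h)) ℚ g ∈ I := by
  classical
  have hgh : 0 < g - h := by omega
  set S := MvPolynomial (Fin h ⊕ Fin (g - h)) ℚ with hS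
  have hPx : (∏ i : Fin h, (X (Sum.inl i) : S)) ^ 2 ∈ I :=
    prod_sq_mem h1 I (fun i => X (Sum.inl i)) (fun k hk he => by simpa using hx k hk he)
  have hPy : (∏ j : Fin (g - h), (X (Sum.inr j) : S)) ^ 2 ∈ I :=
    prod_sq_mem hgh I (fun j => X (Sum.inr j)) (fun k hk he => by simpa using hy k hk he)
  have hcard : Fintype.card (Fin h ⊕ Fin (g - h)) = g := by
    simp only [Fintype.card_sum, Fintype.card_fin]
    omega
  have hps : Finset.powersetCard g (Finset.univ : Finset (Fin h ⊕ Fin (g - h)))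
      = {Finset.univ} := by
    have := Finset.powersetCard_self (Finset.univ : Finset (Fin h ⊕ Fin (g - h)))
    rwa [Finset.card_univ, hcard] at this
  have hEg : esymm (Fin h ⊕ Fin (g - h)) ℚ g = (∏ i : Fin h, (X (Sum.inl i) : S)) *
      (∏ j : Fin (g - h), (X (Sum.inr j) : S)) := by
    rw [show esymm (Fin h ⊕ Fin (g - h)) ℚ g
        = ∑ t ∈ Finset.powersetCard g Finset.univ, ∏ i ∈ t, X i from rfl,
      hps, Finset.sum_singleton, Fintype.prod_sum_type]
  rw [show esymm (Fin h ⊕ Fin (g - h)) ℚ (g - 1)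
      = ∑ t ∈ Finset.powersetCard (g - 1) Finset.univ, ∏ i ∈ t, X i from rfl,
    Finset.sum_mul]
  refine Ideal.sum_mem _ fun t ht => ?_
  rw [Finset.mem_powersetCard_univ] at ht
  have hcompl : tᶜ.card = 1 := by
    rw [Finset.card_compl, ht, hcard]
    omega
  obtain ⟨v, hv⟩ := Finset.card_eq_one.mp hcompl
  have htv : t = {v}ᶜ := by rw [← hv, compl_compl]
  subst htv
  rw [Finset.compl_singleton, hEg]
  rcases v with a | b
  · -- missing variable is an x-variable: extract (∏ y)^2
    have hsub : (Finset.univ : Finset (Fin (g - h))).image Sum.inr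
        ⊆ (Finset.univ : Finset (Fin h ⊕ Fin (g - h))).erase (Sum.inl a) := by
      intro i hi
      rw [Finset.mem_image] at hi
      obtain ⟨b, -, rfl⟩ := hi
      simp
    rw [← Finset.prod_sdiff hsub,
      Finset.prod_image (fun x _ y _ hxy => Sum.inr.inj hxy)]
    have heq : (∏ i ∈ (Finset.univ : Finset (Fin h ⊕ Fin (g - h))).erase (Sum.inl a)
          \ (Finset.univ : Finset (Fin (g - h))).image Sum.inr, (X i : S)) *
          (∏ j : Fin (g - h), (X (Sum.inr j) : S)) *
        ((∏ i : Fin h, (X (Sum.inl i) : S)) * ∏ j : Fin (g - h), (X (Sum.inr j) : S))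
        = ((∏ i ∈ (Finset.univ : Finset (Fin h ⊕ Fin (g - h))).erase (Sum.inl a)
          \ (Finset.univ : Finset (Fin (g - h))).image Sum.inr, (X i : S)) *
          (∏ i : Fin h, (X (Sum.inl i) : S))) *
          (∏ j : Fin (g - h), (X (Sum.inr j) : S)) ^ 2 := by ring
    rw [heq]
    exact Ideal.mul_mem_left _ _ hPy
  · -- missing variable is a y-variable: extract (∏ x)^2
    have hsub : (Finset.univ : Finset (Fin h)).image Sum.inl
        ⊆ (Finset.univ : Finset (Fin h ⊕ Fin (g - h))).erase (Sum.inr b) := by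
      intro i hi
      rw [Finset.mem_image] at hi
      obtain ⟨a, -, rfl⟩ := hi
      simp
    rw [← Finset.prod_sdiff hsub,
      Finset.prod_image (fun x _ y _ hxy => Sum.inl.inj hxy)]
    have heq : (∏ i ∈ (Finset.univ : Finset (Fin h ⊕ Fin (g - h))).erase (Sum.inr b)
          \ (Finset.univ : Finset (Fin h)).image Sum.inl, (X i : S)) *
          (∏ i : Fin h, (X (Sum.inl i) : S)) *
        ((∏ i : Fin h, (X (Sum.inl i) : S)) * ∏ j : Fin (g - h), (X (Sum.inr j) : S))
        = ((∏ i ∈ (Finset.univ : Finset (Fin h ⊕ Fin (g - h))).erase (Sum.inr b)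
          \ (Finset.univ : Finset (Fin h)).image Sum.inl, (X i : S)) *
          (∏ j : Fin (g - h), (X (Sum.inr j) : S))) *
          (∏ i : Fin h, (X (Sum.inl i) : S)) ^ 2 := by ring
    rw [heq]
    exact Ideal.mul_mem_left _ _ hPx
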